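/- The function u(n,t) = (k²·e^{-γkt} / (n·e^{-γkt} + k − n)²) · u₀(k·n·e^{-γkt} / (n·e^{-γkt} + k − n)) satisfies the PDE ∂u/∂t + γ·n·(k−n)·∂u/∂n + γ·(k−2n)·u = 0 on the strip 0 < n < k with u(n,0) = u₀(n). -/

import Mathlib

/-- The explicit formula solves the logistic phase-space continuity equation
`∂u/∂t + γ n (k−n) ∂u/∂n + γ (k−2n) u = 0` on the strip `0 < n < k`, with
`u(n,0) = u₀(n)`. -/
theorem stmt4 (γ k : ℝ) (hγ : 0 ≤ γ) (hk : 0 < k)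
    (u₀ : ℝ → ℝ) (hu₀ : ContDiff ℝ 1 u₀)
    (u : ℝ → ℝ → ℝ)
    (hu : ∀ n t, u n t =
      k ^ 2 * Real.exp (-γ * k * t) / (n * Real.exp (-γ * k * t) + k - n) ^ 2 *
        u₀ (k * n * Real.exp (-γ * k * t) / (n * Real.exp (-γ * k * t) + k - n))) :
    (∀ n t : ℝ, 0 < n → n < k →
      deriv (fun s => u n s) t + γ * n * (k - n) * deriv (fun m => u m t) n +
        γ * (k - 2 * n) * u n t = 0) ∧
    (∀ n : ℝ, 0 < n → n < k → u n 0 = u₀ n) := by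
  have hdiff : Differentiable ℝ u₀ := hu₀.differentiable one_ne_zero
  constructor
  · intro n t hn hnk
    set A : ℝ := Real.exp (-γ * k * t) with hAdef
    have hApos : 0 < A := Real.exp_pos _
    have hDpos : 0 < n * A + k - n := by nlinarith
    have hD : n * A + k - n ≠ 0 := ne_of_gt hDpos
    set D : ℝ := n * A + k - n with hDdef
    set F : ℝ := k * n * A / D with hFdef
    set U' : ℝ := deriv u₀ F with hU'def
    -- derivative of exp(-γ k s) at t
    have h0 : HasDerivAt (fun s : ℝ => -γ * k * s) (-γ * k) t := by
      simpa using (hasDerivAt_id t).const_mul (-γ * k)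
    have hA : HasDerivAt (fun s : ℝ => Real.exp (-γ * k * s)) (-γ * k * A) t := by
      convert h0.exp using 1
      rw [hAdef]; ring
    -- time derivative pieces
    have hDt : HasDerivAt (fun s : ℝ => n * Real.exp (-γ * k * s) + k - n)
        (n * (-γ * k * A)) t := ((hA.const_mul n).add_const k).sub_const n
    have hDsq : HasDerivAt (fun s : ℝ => (n * Real.exp (-γ * k * s) + k - n) ^ 2)
        (2 * D * (n * (-γ * k * A))) t := by
      refine (hDt.pow 2).congr_deriv ?_
      rw [hDdef, hAdef]; push_cast; ring
    have hNum : HasDerivAt (fun s : ℝ => k ^ 2 * Real.exp (-γ * k * s))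
        (k ^ 2 * (-γ * k * A)) t := hA.const_mul (k ^ 2)
    have hg : HasDerivAt (fun s : ℝ =>
        k ^ 2 * Real.exp (-γ * k * s) / (n * Real.exp (-γ * k * s) + k - n) ^ 2)
        ((k ^ 2 * (-γ * k * A) * D ^ 2 - k ^ 2 * A * (2 * D * (n * (-γ * k * A)))) / (D ^ 2) ^ 2)
        t := by
      exact hNum.div hDsq (pow_ne_zero 2 hD)
    have hf : HasDerivAt (fun s : ℝ =>
        k * n * Real.exp (-γ * k * s) / (n * Real.exp (-γ * k * s) + k - n))
        ((k * n * (-γ * k * A) * D - k * n * A * (n * (-γ * k * A))) / D ^ 2) t := by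
      exact (hA.const_mul (k * n)).div hDt hD
    have hcomp : HasDerivAt (fun s : ℝ =>
        u₀ (k * n * Real.exp (-γ * k * s) / (n * Real.exp (-γ * k * s) + k - n)))
        (U' * ((k * n * (-γ * k * A) * D - k * n * A * (n * (-γ * k * A))) / D ^ 2)) t := by
      have h1 : HasDerivAt u₀ U' F := (hdiff F).hasDerivAt
      exact h1.comp t hf
    have hut : HasDerivAt (fun s : ℝ => u n s)
        ((k ^ 2 * (-γ * k * A) * D ^ 2 - k ^ 2 * A * (2 * D * (n * (-γ * k * A)))) / (D ^ 2) ^ 2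
          * u₀ F
        + (k ^ 2 * A / D ^ 2) *
          (U' * ((k * n * (-γ * k * A) * D - k * n * A * (n * (-γ * k * A))) / D ^ 2))) t := by
      have h := hg.mul hcomp
      have heq : (fun s : ℝ => u n s) = fun s : ℝ =>
          k ^ 2 * Real.exp (-γ * k * s) / (n * Real.exp (-γ * k * s) + k - n) ^ 2 *
            u₀ (k * n * Real.exp (-γ * k * s) / (n * Real.exp (-γ * k * s) + k - n)) := by
        funext s; exact hu n s
      rw [heq]
      exact h
    -- space derivative pieces
    have hDn : HasDerivAt (fun m : ℝ => m * Real.exp (-γ * k * t) + k - m) (A - 1) n := by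
      have h := (((hasDerivAt_id n).mul_const (Real.exp (-γ * k * t))).add_const k).sub
        (hasDerivAt_id n)
      refine h.congr_deriv ?_
      rw [hAdef]; ring
    have hDsqn : HasDerivAt (fun m : ℝ => (m * Real.exp (-γ * k * t) + k - m) ^ 2)
        (2 * D * (A - 1)) n := by
      refine (hDn.pow 2).congr_deriv ?_
      rw [hDdef, hAdef]; push_cast; ring
    have hgn : HasDerivAt (fun m : ℝ =>
        k ^ 2 * Real.exp (-γ * k * t) / (m * Real.exp (-γ * k * t) + k - m) ^ 2)
        ((0 * D ^ 2 - k ^ 2 * A * (2 * D * (A - 1))) / (D ^ 2) ^ 2) n := by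
      exact (hasDerivAt_const n (k ^ 2 * Real.exp (-γ * k * t))).div hDsqn
        (pow_ne_zero 2 hD)
    have hfn : HasDerivAt (fun m : ℝ =>
        k * m * Real.exp (-γ * k * t) / (m * Real.exp (-γ * k * t) + k - m))
        ((k * A * D - k * n * A * (A - 1)) / D ^ 2) n := by
      have hnum : HasDerivAt (fun m : ℝ => k * m * Real.exp (-γ * k * t)) (k * A) n := by
        have h := ((hasDerivAt_id n).const_mul k).mul_const (Real.exp (-γ * k * t))
        refine h.congr_deriv ?_
        rw [hAdef]; ring
      exact hnum.div hDn hD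
    have hcompn : HasDerivAt (fun m : ℝ =>
        u₀ (k * m * Real.exp (-γ * k * t) / (m * Real.exp (-γ * k * t) + k - m)))
        (U' * ((k * A * D - k * n * A * (A - 1)) / D ^ 2)) n := by
      have h1 : HasDerivAt u₀ U' F := (hdiff F).hasDerivAt
      exact h1.comp n hfn
    have hun : HasDerivAt (fun m : ℝ => u m t)
        ((0 * D ^ 2 - k ^ 2 * A * (2 * D * (A - 1))) / (D ^ 2) ^ 2 * u₀ F
        + (k ^ 2 * A / D ^ 2) *
          (U' * ((k * A * D - k * n * A * (A - 1)) / D ^ 2))) n := by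
      have h := hgn.mul hcompn
      have heq : (fun m : ℝ => u m t) = fun m : ℝ =>
          k ^ 2 * Real.exp (-γ * k * t) / (m * Real.exp (-γ * k * t) + k - m) ^ 2 *
            u₀ (k * m * Real.exp (-γ * k * t) / (m * Real.exp (-γ * k * t) + k - m)) := by
        funext m; exact hu m t
      rw [heq]
      exact h
    rw [hut.deriv, hun.deriv, hu n t, ← hAdef, ← hDdef, ← hFdef]
    field_simp
    rw [hDdef]
    ring
  · intro n hn hnk
    rw [hu n 0]
    simp only [mul_zero, Real.exp_zero, mul_one]
    rw [show n + k - n = k by ring]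
    rw [div_self (pow_ne_zero 2 hk.ne'), one_mul, mul_comm k n, mul_div_assoc,
      div_self hk.ne', mul_one]
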